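/- arXiv:0804.1948 — 4 statements merged into one kernel-verified Lean document; each statement's English description precedes it below -/
import Mathlib

section
/- For a bounded operator A on h ⊗ H and vectors u, v ∈ h, the operator inequality 0 ≤ A(u,v)* A(u,v) ≤ ‖u‖² · (A*A)(v,v) holds in B(H). -/
open ContinuousLinearMap

local notation "⟪" x ", " y "⟫" => @inner ℂ _ _ x y

/-- `0 ≤ A(u,v)* A(u,v) ≤ ‖u‖² (A*A)(v,v)` in `B(H)`. -/
theorem stmt_3
    {h H HT : Type*}
    [NormedAddCommGroup h] [InnerProductSpace ℂ h] [CompleteSpace h]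
    [NormedAddCommGroup H] [InnerProductSpace ℂ H] [CompleteSpace H]
    [NormedAddCommGroup HT] [InnerProductSpace ℂ HT] [CompleteSpace HT]
    (tmul : h →ₗ[ℂ] H →ₗ[ℂ] HT)
    (htmul : ∀ (u v : h) (ξ η : H), ⟪tmul u ξ, tmul v η⟫ = ⟪u, v⟫ * ⟪ξ, η⟫)
    (A : HT →L[ℂ] HT) (u v : h)
    (Auv : H →L[ℂ] H)
    (hAuv : ∀ ξ₁ ξ₂ : H, ⟪ξ₁, Auv ξ₂⟫ = ⟪tmul u ξ₁, A (tmul v ξ₂)⟫)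
    (AAvv : H →L[ℂ] H)
    (hAAvv : ∀ ξ₁ ξ₂ : H, ⟪ξ₁, AAvv ξ₂⟫ = ⟪tmul v ξ₁, (adjoint A ∘L A) (tmul v ξ₂)⟫) :
    (adjoint Auv ∘L Auv).IsPositive ∧
      (((‖u‖ : ℂ) ^ 2) • AAvv - adjoint Auv ∘L Auv).IsPositive := by
  have hpos1 : (adjoint Auv ∘L Auv).IsPositive := by
    simpa using! isPositive_one.adjoint_conj Auv
  refine ⟨hpos1, ?_⟩
  have hsym : ∀ x y : H, ⟪AAvv x, y⟫ = ⟪x, AAvv y⟫ := by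
    intro x y
    calc ⟪AAvv x, y⟫ = starRingEnd ℂ ⟪y, AAvv x⟫ := by rw [inner_conj_symm]
      _ = starRingEnd ℂ ⟪tmul v y, (adjoint A ∘L A) (tmul v x)⟫ := by rw [hAAvv]
      _ = ⟪(adjoint A ∘L A) (tmul v x), tmul v y⟫ := by rw [inner_conj_symm]
      _ = ⟪tmul v x, (adjoint A ∘L A) (tmul v y)⟫ := by
            simp [ContinuousLinearMap.comp_apply, adjoint_inner_left, adjoint_inner_right]
      _ = ⟪x, AAvv y⟫ := (hAAvv x y).symm
  have hAAvv_sa : IsSelfAdjoint AAvv := by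
    rw [ContinuousLinearMap.isSelfAdjoint_iff']
    exact ((ContinuousLinearMap.eq_adjoint_iff AAvv AAvv).2 hsym).symm
  have hsa : IsSelfAdjoint (((‖u‖ : ℂ) ^ 2) • AAvv - adjoint Auv ∘L Auv) := by
    apply IsSelfAdjoint.sub
    · exact IsSelfAdjoint.smul (by simp [IsSelfAdjoint, star_pow]) hAAvv_sa
    · exact hpos1.isSelfAdjoint
  refine ⟨hsa.isSymmetric, fun ξ => ?_⟩
  rw [reApplyInnerSelf]
  -- norm of tmul u w
  have hTnorm : ∀ w : H, ‖tmul u w‖ = ‖u‖ * ‖w‖ := by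
    intro w
    have h1 : ((‖tmul u w‖ : ℂ)) ^ 2 = ((‖u‖ : ℂ)) ^ 2 * ((‖w‖ : ℂ)) ^ 2 := by
      have := htmul u u w w
      rwa [inner_self_eq_norm_sq_to_K, inner_self_eq_norm_sq_to_K,
        inner_self_eq_norm_sq_to_K] at this
    have h2 : (‖tmul u w‖ : ℝ) ^ 2 = (‖u‖ * ‖w‖) ^ 2 := by
      have : ((‖tmul u w‖ : ℂ)) ^ 2 = (((‖u‖ * ‖w‖ : ℝ)) : ℂ) ^ 2 := by
        push_cast; rw [h1]; ring
      exact_mod_cast this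
    calc ‖tmul u w‖ = Real.sqrt (‖tmul u w‖ ^ 2) := (Real.sqrt_sq (norm_nonneg _)).symm
      _ = Real.sqrt ((‖u‖ * ‖w‖) ^ 2) := by rw [h2]
      _ = ‖u‖ * ‖w‖ := Real.sqrt_sq (by positivity)
  -- ⟪ξ, AAvv ξ⟫ = ‖A (tmul v ξ)‖ ^ 2
  have hre : Complex.re ⟪AAvv ξ, ξ⟫ = ‖A (tmul v ξ)‖ ^ 2 := by
    have : ⟪AAvv ξ, ξ⟫ = starRingEnd ℂ ⟪tmul v ξ, (adjoint A ∘L A) (tmul v ξ)⟫ := by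
      rw [← hAAvv, inner_conj_symm]
    rw [this]
    have : ⟪tmul v ξ, (adjoint A ∘L A) (tmul v ξ)⟫ = ⟪A (tmul v ξ), A (tmul v ξ)⟫ := by
      simp [ContinuousLinearMap.comp_apply, adjoint_inner_right]
    rw [this, inner_self_eq_norm_sq_to_K]
    norm_cast
  -- Cauchy-Schwarz step
  have hkey : ‖Auv ξ‖ ^ 2 ≤ ‖u‖ * ‖Auv ξ‖ * ‖A (tmul v ξ)‖ := by
    have h1 : ⟪Auv ξ, Auv ξ⟫ = ⟪tmul u (Auv ξ), A (tmul v ξ)⟫ := hAuv (Auv ξ) ξ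
    have h2 : ‖⟪Auv ξ, Auv ξ⟫‖ ≤ ‖tmul u (Auv ξ)‖ * ‖A (tmul v ξ)‖ := by
      rw [h1]; exact norm_inner_le_norm _ _
    rw [hTnorm] at h2
    calc ‖Auv ξ‖ ^ 2 = ‖⟪Auv ξ, Auv ξ⟫‖ := by
          rw [inner_self_eq_norm_sq_to_K, norm_pow, RCLike.norm_ofReal, sq_abs]
      _ ≤ ‖u‖ * ‖Auv ξ‖ * ‖A (tmul v ξ)‖ := by rw [mul_assoc] at h2 ⊢; exact h2
  have hsq : ‖Auv ξ‖ ^ 2 ≤ ‖u‖ ^ 2 * ‖A (tmul v ξ)‖ ^ 2 := by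
    rcases eq_or_lt_of_le (norm_nonneg (Auv ξ)) with h0 | h0
    · rw [← h0]; norm_num; positivity
    · have : ‖Auv ξ‖ ≤ ‖u‖ * ‖A (tmul v ξ)‖ := by
        have := hkey
        nlinarith
      nlinarith [norm_nonneg (Auv ξ), mul_nonneg (norm_nonneg u) (norm_nonneg (A (tmul v ξ)))]
  -- assemble
  have hT : Complex.re ⟪(adjoint Auv ∘L Auv) ξ, ξ⟫ = ‖Auv ξ‖ ^ 2 := by
    rw [ContinuousLinearMap.comp_apply, adjoint_inner_left, inner_self_eq_norm_sq_to_K]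
    norm_cast
  rw [ContinuousLinearMap.sub_apply, inner_sub_left, map_sub,
    ContinuousLinearMap.smul_apply, inner_smul_left]
  have : Complex.re (starRingEnd ℂ ((‖u‖ : ℂ) ^ 2) * ⟪AAvv ξ, ξ⟫)
      = ‖u‖ ^ 2 * ‖A (tmul v ξ)‖ ^ 2 := by
    have hc : (starRingEnd ℂ) ((‖u‖ : ℂ) ^ 2) = ((‖u‖ ^ 2 : ℝ) : ℂ) := by
      push_cast
      rw [map_pow, Complex.conj_ofReal]
    rw [hc, Complex.re_ofReal_mul, hre]
  simp only [RCLike.re_to_complex]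
  rw [this, hT]
  linarith
end

section
/- Let U be a unitary on h ⊗ H, Ω ∈ H a unit vector, {e_m} an orthonormal basis of h, and T ∈ B(h) the vacuum expectation of U given by ⟨u, Tv⟩ = ⟨u⊗Ω, U(v⊗Ω)⟩. Then for every v ∈ h: Σ_{m≥1} ‖(U − 1)(e_m, v) Ω‖² = 2 Re ⟨v, (1 − T) v⟩ ≤ 2 ‖v‖ · ‖(T − 1)v‖, where (U−1)(e_m,v) denotes the partial matrix element operator. -/
open ContinuousLinearMap

local notation "⟪" x ", " y "⟫" => @inner ℂ _ _ x y

/-- `Σ_m ‖(U − 1)(e_m, v) Ω‖² = 2 Re ⟨v, (1 − T) v⟩ ≤ 2 ‖v‖ ‖(T − 1)v‖`. -/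
theorem stmt_7
    {h H HT : Type*}
    [NormedAddCommGroup h] [InnerProductSpace ℂ h] [CompleteSpace h]
    [NormedAddCommGroup H] [InnerProductSpace ℂ H] [CompleteSpace H]
    [NormedAddCommGroup HT] [InnerProductSpace ℂ HT] [CompleteSpace HT]
    (tmul : h →ₗ[ℂ] H →ₗ[ℂ] HT)
    (htmul : ∀ (u v : h) (ξ η : H), ⟪tmul u ξ, tmul v η⟫ = ⟪u, v⟫ * ⟪ξ, η⟫)
    (htotal : (Submodule.span ℂ {x : HT | ∃ (w : h) (ξ : H), x = tmul w ξ}).topologicalClosure = ⊤)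
    (U : HT →L[ℂ] HT) (hU : U ∈ unitary (HT →L[ℂ] HT))
    (Ω : H) (hΩ : ‖Ω‖ = 1)
    (e : HilbertBasis ℕ ℂ h)
    (T : h →L[ℂ] h)
    (hT : ∀ u v : h, ⟪u, T v⟫ = ⟪tmul u Ω, U (tmul v Ω)⟫)
    (v : h)
    -- the partial matrix element operators `(U − 1)(e_m, v)`
    (W : ℕ → (H →L[ℂ] H))
    (hW : ∀ (m : ℕ) (ξ₁ ξ₂ : H),
      ⟪ξ₁, W m ξ₂⟫ = ⟪tmul (e m) ξ₁, U (tmul v ξ₂) - tmul v ξ₂⟫) :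
    HasSum (fun m => ‖W m Ω‖ ^ 2) (2 * (⟪v, v - T v⟫).re) ∧
      2 * (⟪v, v - T v⟫).re ≤ 2 * ‖v‖ * ‖T v - v‖ := by
  have hineq : 2 * (⟪v, v - T v⟫).re ≤ 2 * ‖v‖ * ‖T v - v‖ := by
    have h1 : (⟪v, v - T v⟫).re ≤ ‖⟪v, v - T v⟫‖ := by
      simpa using RCLike.re_le_norm (⟪v, v - T v⟫)
    have h2 : ‖⟪v, v - T v⟫‖ ≤ ‖v‖ * ‖v - T v‖ := norm_inner_le_norm v (v - T v)
    rw [norm_sub_rev] at h2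
    linarith
  refine ⟨?_, hineq⟩
  classical
  obtain ⟨s, f, hf⟩ := exists_hilbertBasis ℂ H
  set x : HT := U (tmul v Ω) - tmul v Ω with hx
  -- norm of elementary tensors
  have hnorm : ∀ (w : h) (ξ : H), ‖tmul w ξ‖ = ‖w‖ * ‖ξ‖ := by
    intro w ξ
    have h1 := htmul w w ξ ξ
    rw [inner_self_eq_norm_sq_to_K, inner_self_eq_norm_sq_to_K,
      inner_self_eq_norm_sq_to_K] at h1
    have h3 : ‖tmul w ξ‖ ^ 2 = ‖w‖ ^ 2 * ‖ξ‖ ^ 2 := by exact_mod_cast h1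
    nlinarith [norm_nonneg (tmul w ξ), norm_nonneg w, norm_nonneg ξ,
      mul_nonneg (norm_nonneg w) (norm_nonneg ξ)]
  have hψb : ∀ (w : h) (ξ : H), ‖tmul w ξ‖ ≤ ‖w‖ * ‖ξ‖ := fun w ξ => le_of_eq (hnorm w ξ)
  let ψ : h → (H →L[ℂ] HT) := fun w => LinearMap.mkContinuous (tmul w) ‖w‖ (hψb w)
  let φ : H → (h →L[ℂ] HT) := fun ξ => LinearMap.mkContinuous (tmul.flip ξ) ‖ξ‖
    (fun w => by simpa [mul_comm] using le_of_eq (hnorm w ξ))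
  have hψ : ∀ (w : h) (ξ : H), ψ w ξ = tmul w ξ := fun _ _ => rfl
  have hφ : ∀ (w : h) (ξ : H), φ ξ w = tmul w ξ := fun _ _ => rfl
  -- the orthonormal family
  set g : ℕ × s → HT := fun p => tmul (e p.1) (f p.2) with hg
  have hgon : Orthonormal ℂ g := by
    rw [orthonormal_iff_ite]
    intro p q
    have h1 := htmul (e p.1) (e q.1) (f p.2) (f q.2)
    rw [hg]
    dsimp only
    rw [h1, orthonormal_iff_ite.mp e.orthonormal, orthonormal_iff_ite.mp f.orthonormal]
    by_cases h1 : p.1 = q.1 <;> by_cases h2 : p.2 = q.2 <;>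
      simp [h1, h2, Prod.ext_iff]
  -- density of the family g
  have hgdense : ⊤ ≤ (Submodule.span ℂ (Set.range g)).topologicalClosure := by
    rw [← htotal]
    set S := (Submodule.span ℂ (Set.range g)).topologicalClosure with hS
    have hScl : IsClosed (S : Set HT) := Submodule.isClosed_topologicalClosure _
    have step1 : ∀ (m : ℕ) (ξ : H), tmul (e m) ξ ∈ S := by
      intro m ξ
      have hMcl : IsClosed ((S.comap (ψ (e m) : H →ₗ[ℂ] HT)) : Set H) :=
        hScl.preimage (ψ (e m)).continuous
      have hsub : Submodule.span ℂ (Set.range (⇑f)) ≤ S.comap (ψ (e m) : H →ₗ[ℂ] HT) := by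
        rw [Submodule.span_le]
        rintro _ ⟨i, rfl⟩
        simp only [SetLike.mem_coe, Submodule.mem_comap, ContinuousLinearMap.coe_coe, hψ]
        exact Submodule.le_topologicalClosure _
          (Submodule.subset_span ⟨(m, i), rfl⟩)
      have hmem : ξ ∈ (Submodule.span ℂ (Set.range (⇑f))).topologicalClosure := by
        rw [f.dense_span]; trivial
      exact (Submodule.topologicalClosure_minimal _ hsub hMcl) hmem
    have step2 : ∀ (w : h) (ξ : H), tmul w ξ ∈ S := by
      intro w ξ
      have hMcl : IsClosed ((S.comap (φ ξ : h →ₗ[ℂ] HT)) : Set h) := hScl.preimage (φ ξ).continuous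
      have hsub : Submodule.span ℂ (Set.range (⇑e)) ≤ S.comap (φ ξ : h →ₗ[ℂ] HT) := by
        rw [Submodule.span_le]
        rintro _ ⟨m, rfl⟩
        simp only [SetLike.mem_coe, Submodule.mem_comap, ContinuousLinearMap.coe_coe, hφ]
        exact step1 m ξ
      have hmem : w ∈ (Submodule.span ℂ (Set.range (⇑e))).topologicalClosure := by
        rw [e.dense_span]; trivial
      exact (Submodule.topologicalClosure_minimal _ hsub hMcl) hmem
    refine Submodule.topologicalClosure_minimal _ ?_ hScl
    rw [Submodule.span_le]
    rintro _ ⟨w, ξ, rfl⟩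
    exact step2 w ξ
  -- Parseval for the basis built from g
  set b : HilbertBasis (ℕ × s) ℂ HT := HilbertBasis.mk hgon hgdense with hb
  have hbg : ⇑b = g := HilbertBasis.coe_mk _ _
  have hsum : HasSum (fun p : ℕ × s => ⟪x, g p⟫ * ⟪g p, x⟫) ⟪x, x⟫ := by
    have h0 : HasSum (fun p : ℕ × s => ⟪x, b p⟫ * ⟪b p, x⟫) ⟪x, x⟫ :=
      b.hasSum_inner_mul_inner x x
    rwa [hbg] at h0
  have key : (fun p : ℕ × s => (⟪x, g p⟫ * ⟪g p, x⟫).re)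
      = fun p => ‖⟪g p, x⟫‖ ^ 2 := by
    funext p
    rw [← inner_conj_symm x (g p), RCLike.conj_mul]
    norm_cast
  have hsumre : HasSum (fun p : ℕ × s => ‖⟪g p, x⟫‖ ^ 2) (⟪x, x⟫).re := by
    have h1 := Complex.hasSum_re hsum
    rwa [key] at h1
  -- fiberwise sums
  have hfib : ∀ m : ℕ, HasSum (fun i : s => ‖⟪g (m, i), x⟫‖ ^ 2) (‖W m Ω‖ ^ 2) := by
    intro m
    have h0 : HasSum (fun i : s => ⟪W m Ω, f i⟫ * ⟪f i, W m Ω⟫) ⟪W m Ω, W m Ω⟫ :=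
      f.hasSum_inner_mul_inner _ _
    have key2 : (fun i : s => (⟪W m Ω, f i⟫ * ⟪f i, W m Ω⟫).re)
        = fun i => ‖⟪g (m, i), x⟫‖ ^ 2 := by
      funext i
      have hz : ⟪f i, W m Ω⟫ = ⟪g (m, i), x⟫ := hW m (f i) Ω
      rw [← inner_conj_symm (W m Ω) (f i), RCLike.conj_mul, hz]
      norm_cast
    have h1 := Complex.hasSum_re h0
    rw [key2] at h1
    have h2 : (⟪W m Ω, W m Ω⟫ : ℂ).re = ‖W m Ω‖ ^ 2 := by
      rw [inner_self_eq_norm_sq_to_K]; norm_cast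
    rwa [h2] at h1
  have hfinal : HasSum (fun m => ‖W m Ω‖ ^ 2) (⟪x, x⟫).re :=
    hsumre.prod_fiberwise hfib
  -- identify the sum
  have hstar : adjoint U * U = 1 := by
    have := (Unitary.mem_iff.mp hU).1
    rwa [star_eq_adjoint] at this
  have hUU : ∀ a c : HT, ⟪U a, U c⟫ = ⟪a, c⟫ := by
    intro a c
    calc ⟪U a, U c⟫ = ⟪a, adjoint U (U c)⟫ := (adjoint_inner_right U a (U c)).symm
      _ = ⟪a, (adjoint U * U) c⟫ := by rw [ContinuousLinearMap.mul_apply]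
      _ = ⟪a, c⟫ := by rw [hstar, ContinuousLinearMap.one_apply]
  have hvv : ⟪tmul v Ω, tmul v Ω⟫ = ⟪v, v⟫ := by
    rw [htmul, inner_self_eq_norm_sq_to_K Ω, hΩ]
    norm_num
  have hxx : ⟪x, x⟫ = ⟪v, v⟫ - (starRingEnd ℂ) ⟪v, T v⟫ - ⟪v, T v⟫ + ⟪v, v⟫ := by
    rw [hx, inner_sub_left, inner_sub_right, inner_sub_right, hUU, hvv,
      ← inner_conj_symm (U (tmul v Ω)) (tmul v Ω), ← hT v v]
    ring
  have hre : (⟪x, x⟫).re = 2 * (⟪v, v - T v⟫).re := by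
    rw [hxx, inner_sub_right]
    simp only [Complex.sub_re, Complex.add_re, Complex.conj_re]
    ring
  rwa [hre] at hfinal
end

section
/- Let G be the generator of a C₀-contraction semigroup on h, with domain D(G), and let A be a positive self-adjoint operator with D(G) ⊆ D(A) such that ⟨v, A v⟩ = −2 Re ⟨v, G v⟩ for all v ∈ D(G). Suppose L : D(G) → h ⊗ k is a linear operator satisfying ‖L v‖² = ⟨v, A v⟩ for all v ∈ D(G). Then L is closable. -/
open Filter
open scoped NNReal

local notation "⟪" x ", " y "⟫" => @inner ℂ _ _ x y

/-- If `G` generates a `C₀`-contraction semigroup, `A` is a positive self-adjoint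
operator with `D(G) ⊆ D(A)` and `⟨v, A v⟩ = −2 Re ⟨v, G v⟩` on `D(G)`, and
`L : D(G) → h ⊗ k` satisfies `‖L v‖² = ⟨v, A v⟩`, then `L` is closable. -/
theorem stmt_11
    {h K : Type*}
    [NormedAddCommGroup h] [InnerProductSpace ℂ h] [CompleteSpace h]
    [NormedAddCommGroup K] [InnerProductSpace ℂ K] [CompleteSpace K]
    (G : h →ₗ.[ℂ] h)
    -- `G` generates the `C₀`-contraction semigroup `T`
    (T : ℝ≥0 → (h →L[ℂ] h))
    (hT0 : T 0 = 1)
    (hTsemi : ∀ s t : ℝ≥0, T (s + t) = T s ∘L T t)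
    (hTcontr : ∀ t, ‖T t‖ ≤ 1)
    (hTcont : ∀ v : h, Continuous fun t : ℝ≥0 => T t v)
    (hGen : ∀ v : G.domain,
      Tendsto (fun t : ℝ≥0 => (((t : ℝ) : ℂ))⁻¹ • (T t (v : h) - (v : h)))
        (nhdsWithin 0 (Set.Ioi 0)) (nhds (G v)))
    -- `A` positive and self-adjoint with `D(G) ⊆ D(A)`
    (A : h →ₗ.[ℂ] h)
    (hAself : A.adjoint = A)
    (hApos : ∀ x : A.domain, 0 ≤ (⟪(x : h), A x⟫).re)
    (hGA : G.domain ≤ A.domain)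
    (hform : ∀ v : G.domain,
      ⟪(v : h), A ⟨(v : h), hGA v.2⟩⟫ = ((-2 * (⟪(v : h), G v⟫).re : ℝ) : ℂ))
    -- `L` with domain `D(G)` and `‖L v‖² = ⟨v, A v⟩`
    (L : h →ₗ.[ℂ] K)
    (hLdom : L.domain = G.domain)
    (hLnorm : ∀ (v : h) (hv : v ∈ L.domain) (hv' : v ∈ A.domain),
      (‖L ⟨v, hv⟩‖ ^ 2 : ℝ) = (⟪v, A ⟨v, hv'⟩⟫).re) :
    L.IsClosable := by
  classical
  have hLA : L.domain ≤ A.domain := hLdom.le.trans hGA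
  -- The restriction of `A` to `D(L)` as a genuine linear map.
  set A' : L.domain →ₗ[ℂ] h := A.toFun.comp (Submodule.inclusion hLA) with hA'
  have hA'app : ∀ v : L.domain, A' v = A ⟨(v : h), hLA v.2⟩ := fun v => rfl
  -- The diagonal identity `⟪L v, L v⟫ = ⟪v, A v⟫`.
  have hdiag : ∀ v : L.domain, ⟪L v, L v⟫ = ⟪(v : h), A' v⟫ := by
    intro v
    have hvG : (v : h) ∈ G.domain := hLdom ▸ v.2
    have h1 := hform ⟨(v : h), hvG⟩
    have h2 := hLnorm (v : h) v.2 (hLA v.2)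
    have he : A ⟨(v : h), hGA (Subtype.mk (v : h) hvG).2⟩ = A ⟨(v : h), hLA v.2⟩ := rfl
    rw [he] at h1
    have hre : (⟪(v : h), A ⟨(v : h), hLA v.2⟩⟫).im = 0 := by
      rw [h1]; simp
    have : ⟪(v : h), A ⟨(v : h), hLA v.2⟩⟫ = ((‖L v‖ ^ 2 : ℝ) : ℂ) := by
      apply Complex.ext
      · rw [Complex.ofReal_re]; exact h2.symm
      · rw [Complex.ofReal_im]; exact hre
    rw [hA'app, this, @inner_self_eq_norm_sq_to_K ℂ]
    norm_cast
  -- Polarization: `⟪L x, L y⟫ = ⟪x, A y⟫` for `x y ∈ D(L)`.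
  have hcross : ∀ x y : L.domain, ⟪L x, L y⟫ = ⟪(x : h), A' y⟫ := by
    intro x y
    have hpol := inner_eq_sum_norm_sq_div_four (𝕜 := ℂ) (L x) (L y)
    have e1 : L x + L y = L (x + y) := (L.map_add x y).symm
    have e2 : L x - L y = L (x - y) := by
      rw [L.map_sub]
    have e3 : L x - (Complex.I : ℂ) • L y = L (x - (Complex.I : ℂ) • y) := by
      rw [L.map_sub, L.map_smul]
    have e4 : L x + (Complex.I : ℂ) • L y = L (x + (Complex.I : ℂ) • y) := by
      rw [L.map_add, L.map_smul]
    simp only [← @inner_self_eq_norm_sq_to_K ℂ, RCLike.I_to_complex] at hpol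
    rw [e1, e2, e3, e4] at hpol
    rw [hpol, hdiag, hdiag, hdiag, hdiag]
    simp only [map_add, map_sub, map_smul, Submodule.coe_add, Submodule.coe_sub,
      Submodule.coe_smul, inner_add_left, inner_add_right, inner_sub_left,
      inner_sub_right, inner_smul_left, inner_smul_right, Complex.conj_I]
    ring_nf
    simp [Complex.I_sq]
    ring
  -- Closability via the graph criterion.
  have hg : ∀ {x : h × K}, x ∈ L.graph.topologicalClosure → x.fst = 0 → x.snd = 0 := by
    intro x hx hx0
    obtain ⟨w⟩ := (⟨x.2⟩ : Nonempty K)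
    -- get an approximating sequence from the graph
    have hx' : x ∈ closure (L.graph : Set (h × K)) := hx
    rw [mem_closure_iff_seq_limit] at hx'
    obtain ⟨f, hfmem, hflim⟩ := hx'
    choose y hy using fun n => L.mem_graph_iff.mp (hfmem n)
    have hfst : Tendsto (fun n => ((y n : h))) atTop (nhds 0) := by
      have := (continuous_fst.tendsto x).comp hflim
      simp only [Function.comp_def] at this
      rw [hx0] at this
      refine this.congr fun n => ?_
      exact ((hy n).1).symm
    have hsnd : Tendsto (fun n => L (y n)) atTop (nhds x.2) := by
      have := (continuous_snd.tendsto x).comp hflim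
      simp only [Function.comp_def] at this
      refine this.congr fun n => ?_
      exact ((hy n).2).symm
    -- `⟪x.2, L u⟫ = 0` for every `u` in the domain
    have horth : ∀ u : L.domain, ⟪x.2, L u⟫ = 0 := by
      intro u
      have h1 : Tendsto (fun n => ⟪L (y n), L u⟫) atTop (nhds ⟪x.2, L u⟫) :=
        Tendsto.inner hsnd tendsto_const_nhds
      have h2 : Tendsto (fun n => ⟪L (y n), L u⟫) atTop (nhds 0) := by
        have : Tendsto (fun n => ⟪((y n : h)), A' u⟫) atTop (nhds 0) := by
          have := Tendsto.inner (𝕜 := ℂ) hfst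
            (tendsto_const_nhds : Tendsto (fun _ : ℕ => A' u) atTop (nhds (A' u)))
          simpa using this
        refine this.congr fun n => (hcross (y n) u).symm
      exact tendsto_nhds_unique h1 h2
    -- conclude `x.2 = 0`
    have hself : ⟪x.2, x.2⟫ = 0 := by
      have h1 : Tendsto (fun n => ⟪x.2, L (y n)⟫) atTop (nhds ⟪x.2, x.2⟫) :=
        Tendsto.inner tendsto_const_nhds hsnd
      have h2 : (fun n => ⟪x.2, L (y n)⟫) = fun _ => (0 : ℂ) :=
        funext fun n => horth (y n)
      rw [h2] at h1
      exact tendsto_nhds_unique h1 tendsto_const_nhds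
    exact inner_self_eq_zero.mp hself
  refine ⟨L.graph.topologicalClosure.toLinearPMap, ?_⟩
  exact (Submodule.toLinearPMap_graph_eq _ fun {x} hx hx0 => hg hx hx0).symm
end

section
/- Let G generate a C₀-contraction semigroup on h with resolvent (n − G)^{-1} for n ≥ 1. Define G(n) = n² (n − G*)^{-1} G (n − G)^{-1} and, for operators L_j with Σ_j ‖L_j v‖² = −2 Re⟨v, Gv⟩ on D(G), define L_j(n) = n L_j (n − G)^{-1}. Then G(n), L_j(n) are bounded and for every v ∈ h: Σ_j ‖L_j(n) v‖² = −2 Re ⟨v, G(n) v⟩. -/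
local notation "⟪" x ", " y "⟫" => @inner ℂ _ _ x y

/-- With `G(n) = n² (n − G*)⁻¹ G (n − G)⁻¹` and `L_j(n) = n L_j (n − G)⁻¹`, the
operators `G(n)` and `L_j(n)` are bounded and `Σ_j ‖L_j(n) v‖² = −2 Re⟨v, G(n) v⟩`
for every `v ∈ h`. -/
theorem stmt_13
    {h : Type*}
    [NormedAddCommGroup h] [InnerProductSpace ℂ h] [CompleteSpace h]
    (G : h →ₗ.[ℂ] h)
    (n : ℕ) (hn : 1 ≤ n)
    -- the resolvent `Rn = (n − G)⁻¹` and `Rn' = (n − G*)⁻¹`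
    (Rn : h →L[ℂ] h) (hmem : ∀ v : h, Rn v ∈ G.domain)
    (hres : ∀ v : h, (n : ℂ) • Rn v - G ⟨Rn v, hmem v⟩ = v)
    (hcontr : ∀ v : h, ‖(n : ℂ) • Rn v‖ ≤ ‖v‖)
    (Rn' : h →L[ℂ] h) (hmem' : ∀ v : h, Rn' v ∈ G.adjoint.domain)
    (hres' : ∀ v : h, (n : ℂ) • Rn' v - G.adjoint ⟨Rn' v, hmem' v⟩ = v)
    (hcontr' : ∀ v : h, ‖(n : ℂ) • Rn' v‖ ≤ ‖v‖)
    -- the operators `L_j` on `D(G)` with `Σ_j ‖L_j w‖² = −2 Re⟨w, G w⟩`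
    (L : ℕ → (G.domain →ₗ[ℂ] h))
    (hsum : ∀ w : G.domain, HasSum (fun j => ‖L j w‖ ^ 2) (-2 * (⟪(w : h), G w⟫).re)) :
    (∃ C : ℝ, ∀ v : h, ‖((n : ℂ) ^ 2) • Rn' (G ⟨Rn v, hmem v⟩)‖ ≤ C * ‖v‖) ∧
      (∀ j : ℕ, ∃ C : ℝ, ∀ v : h, ‖(n : ℂ) • L j ⟨Rn v, hmem v⟩‖ ≤ C * ‖v‖) ∧
      ∀ v : h,
        HasSum (fun j => ‖(n : ℂ) • L j ⟨Rn v, hmem v⟩‖ ^ 2)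
          (-2 * (⟪v, ((n : ℂ) ^ 2) • Rn' (G ⟨Rn v, hmem v⟩)⟫).re) := by
  have hn1 : (1 : ℝ) ≤ (n : ℝ) := by exact_mod_cast hn
  have hnpos : (0 : ℝ) < (n : ℝ) := lt_of_lt_of_le zero_lt_one hn1
  -- dissipativity
  have hdiss : ∀ w : G.domain, (⟪(w : h), G w⟫).re ≤ 0 := by
    intro w
    have h0 : 0 ≤ -2 * (⟪(w : h), G w⟫).re :=
      (hsum w).nonneg fun j => sq_nonneg _
    linarith
  -- `G w = n • Rn v - v` for `w = Rn v`
  have hGeq : ∀ v : h, G ⟨Rn v, hmem v⟩ = (n : ℂ) • Rn v - v := by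
    intro v
    have h1 : (n : ℂ) • Rn v = v + G ⟨Rn v, hmem v⟩ := sub_eq_iff_eq_add.mp (hres v)
    rw [h1]; abel
  -- bound on ‖G w‖ for w = Rn v
  have hGw : ∀ v : h, ‖G ⟨Rn v, hmem v⟩‖ ≤ 2 * ‖v‖ := by
    intro v
    rw [hGeq v]
    calc ‖(n : ℂ) • Rn v - v‖ ≤ ‖(n : ℂ) • Rn v‖ + ‖v‖ := norm_sub_le _ _
      _ ≤ ‖v‖ + ‖v‖ := by linarith [hcontr v]
      _ = 2 * ‖v‖ := by ring
  -- bound on ‖Rn v‖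
  have hRn : ∀ v : h, (n : ℝ) * ‖Rn v‖ ≤ ‖v‖ := by
    intro v
    have h1 := hcontr v
    rw [norm_smul] at h1
    simpa using h1
  -- density of the domain
  have hdense : Dense (G.domain : Set h) := by
    rw [Submodule.dense_iff_topologicalClosure_eq_top,
      Submodule.topologicalClosure_eq_top_iff]
    rw [Submodule.eq_bot_iff]
    intro u hu
    have h1 : ⟪Rn u, u⟫ = 0 :=
      Submodule.inner_right_of_mem_orthogonal (hmem u) hu
    have h2 : ⟪Rn u, ((n : ℂ) • Rn u - G ⟨Rn u, hmem u⟩)⟫ = 0 := by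
      rw [hres u]; exact h1
    rw [inner_sub_right, inner_smul_right] at h2
    have h2' : ⟪Rn u, G ⟨Rn u, hmem u⟩⟫ = (n : ℂ) * ⟪Rn u, Rn u⟫ :=
      (sub_eq_zero.mp h2).symm
    have h3 : (⟪Rn u, G ⟨Rn u, hmem u⟩⟫).re = (n : ℝ) * ‖Rn u‖ ^ 2 := by
      have hre : (⟪Rn u, Rn u⟫).re = ‖Rn u‖ ^ 2 := by
        rw [← RCLike.re_to_complex]; exact inner_self_eq_norm_sq (Rn u)
      have him : (⟪Rn u, Rn u⟫).im = 0 := by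
        rw [← RCLike.im_to_complex]; exact inner_self_im (Rn u)
      rw [h2', Complex.mul_re, hre, him]
      simp
    have h4 : (⟪(↑(⟨Rn u, hmem u⟩ : G.domain) : h), G ⟨Rn u, hmem u⟩⟫).re ≤ 0 :=
      hdiss _
    have h4' : (⟪Rn u, G ⟨Rn u, hmem u⟩⟫).re ≤ 0 := h4
    have h5 : Rn u = 0 := by
      have hsq : ‖Rn u‖ ^ 2 ≤ 0 := by nlinarith
      have : ‖Rn u‖ = 0 := by nlinarith [norm_nonneg (Rn u)]
      exact norm_eq_zero.mp this
    have h6 : (⟨Rn u, hmem u⟩ : G.domain) = 0 := by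
      ext; exact h5
    have h8 : G ⟨Rn u, hmem u⟩ = 0 := by rw [h6]; exact G.toFun.map_zero
    have h7 := hres u
    rw [h8, sub_zero, h5, smul_zero] at h7
    exact h7.symm
  -- formal adjoint property
  have hadj : ∀ (a : G.adjoint.domain) (w : G.domain),
      ⟪G.adjoint a, (w : h)⟫ = ⟪(a : h), G w⟫ :=
    G.adjoint_isFormalAdjoint hdense
  -- key inner product identity
  have hkey : ∀ v : h, ⟪v, Rn' (G ⟨Rn v, hmem v⟩)⟫ = ⟪Rn v, G ⟨Rn v, hmem v⟩⟫ := by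
    intro v
    set u : h := G ⟨Rn v, hmem v⟩ with hu
    have e1 : v = (n : ℂ) • Rn v - u := (hres v).symm
    have e2 : u = (n : ℂ) • Rn' u - G.adjoint ⟨Rn' u, hmem' u⟩ := (hres' u).symm
    have e3 : ⟪Rn v, G.adjoint ⟨Rn' u, hmem' u⟩⟫ = ⟪u, Rn' u⟫ := by
      have hh := hadj ⟨Rn' u, hmem' u⟩ ⟨Rn v, hmem v⟩
      calc ⟪Rn v, G.adjoint ⟨Rn' u, hmem' u⟩⟫
          = starRingEnd ℂ ⟪G.adjoint ⟨Rn' u, hmem' u⟩, Rn v⟫ :=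
            (inner_conj_symm _ _).symm
        _ = starRingEnd ℂ ⟪Rn' u, u⟫ := by
            rw [show ⟪G.adjoint ⟨Rn' u, hmem' u⟩, Rn v⟫ = ⟪Rn' u, u⟫ from hh]
        _ = ⟪u, Rn' u⟫ := inner_conj_symm _ _
    calc ⟪v, Rn' u⟫ = ⟪(n : ℂ) • Rn v - u, Rn' u⟫ := by rw [← e1]
      _ = (n : ℂ) * ⟪Rn v, Rn' u⟫ - ⟪u, Rn' u⟫ := by
          rw [inner_sub_left, inner_smul_left, Complex.conj_natCast]
      _ = (n : ℂ) * ⟪Rn v, Rn' u⟫ - ⟪Rn v, G.adjoint ⟨Rn' u, hmem' u⟩⟫ := by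
          rw [e3]
      _ = ⟪Rn v, (n : ℂ) • Rn' u - G.adjoint ⟨Rn' u, hmem' u⟩⟫ := by
          rw [inner_sub_right, inner_smul_right]
      _ = ⟪Rn v, u⟫ := by rw [← e2]
  refine ⟨⟨2 * n, ?_⟩, fun j => ⟨2 * n, ?_⟩, ?_⟩
  · intro v
    have h1 : ‖((n : ℂ) ^ 2) • Rn' (G ⟨Rn v, hmem v⟩)‖
        = (n : ℝ) * ‖(n : ℂ) • Rn' (G ⟨Rn v, hmem v⟩)‖ := by
      rw [pow_two, mul_smul, norm_smul]
      simp
    rw [h1]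
    calc (n : ℝ) * ‖(n : ℂ) • Rn' (G ⟨Rn v, hmem v⟩)‖
        ≤ (n : ℝ) * ‖G ⟨Rn v, hmem v⟩‖ :=
          mul_le_mul_of_nonneg_left (hcontr' _) (le_of_lt hnpos)
      _ ≤ (n : ℝ) * (2 * ‖v‖) := mul_le_mul_of_nonneg_left (hGw v) (le_of_lt hnpos)
      _ = 2 * n * ‖v‖ := by ring
  · intro v
    set w : G.domain := ⟨Rn v, hmem v⟩ with hw
    have h1 : ‖L j w‖ ^ 2 ≤ -2 * (⟪(w : h), G w⟫).re :=
      le_hasSum (hsum w) j fun i _ => sq_nonneg _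
    have h2 : -(⟪(w : h), G w⟫).re ≤ ‖(w : h)‖ * ‖G w‖ := by
      have ha := Complex.abs_re_le_norm (⟪(w : h), G w⟫)
      have hb : ‖(⟪(w : h), G w⟫)‖ ≤ ‖(w : h)‖ * ‖G w‖ := by
        simpa using norm_inner_le_norm (𝕜 := ℂ) (w : h) (G w)
      have hab := abs_le.mp (le_trans ha hb)
      linarith [hab.1]
    have hwv : (n : ℝ) * ‖(w : h)‖ ≤ ‖v‖ := hRn v
    have hg : ‖G w‖ ≤ 2 * ‖v‖ := hGw v
    have hnn : ‖(n : ℂ) • L j w‖ = (n : ℝ) * ‖L j w‖ := by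
      rw [norm_smul]; simp
    have hsq : ((n : ℝ) * ‖L j w‖) ^ 2 ≤ (2 * n * ‖v‖) ^ 2 := by
      have ha : ‖L j w‖ ^ 2 ≤ 2 * (‖(w : h)‖ * ‖G w‖) := by linarith
      have ha2 : (n : ℝ) ^ 2 * ‖L j w‖ ^ 2
          ≤ (n : ℝ) ^ 2 * (2 * (‖(w : h)‖ * ‖G w‖)) :=
        mul_le_mul_of_nonneg_left ha (sq_nonneg _)
      have hb : (n : ℝ) * ‖G w‖ ≤ (n : ℝ) * (2 * ‖v‖) :=
        mul_le_mul_of_nonneg_left hg hnpos.le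
      have hc : ((n : ℝ) * ‖(w : h)‖) * ((n : ℝ) * ‖G w‖)
          ≤ ‖v‖ * ((n : ℝ) * (2 * ‖v‖)) :=
        mul_le_mul hwv hb (by positivity) (norm_nonneg v)
      calc ((n : ℝ) * ‖L j w‖) ^ 2 = (n : ℝ) ^ 2 * ‖L j w‖ ^ 2 := by ring
        _ ≤ (n : ℝ) ^ 2 * (2 * (‖(w : h)‖ * ‖G w‖)) := ha2
        _ = 2 * (((n : ℝ) * ‖(w : h)‖) * ((n : ℝ) * ‖G w‖)) := by ring
        _ ≤ 2 * (‖v‖ * ((n : ℝ) * (2 * ‖v‖))) := by linarith [hc]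
        _ = 4 * (n : ℝ) * ‖v‖ ^ 2 := by ring
        _ ≤ 4 * (n : ℝ) ^ 2 * ‖v‖ ^ 2 := by
            nlinarith [mul_nonneg (mul_nonneg hnpos.le (sub_nonneg.mpr hn1))
              (sq_nonneg ‖v‖)]
        _ = (2 * n * ‖v‖) ^ 2 := by ring
    rw [hnn]
    have hb2 : (0 : ℝ) ≤ 2 * n * ‖v‖ := by positivity
    have ha2 : (0 : ℝ) ≤ (n : ℝ) * ‖L j w‖ := by positivity
    calc (n : ℝ) * ‖L j w‖ = Real.sqrt (((n : ℝ) * ‖L j w‖) ^ 2) :=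
          (Real.sqrt_sq ha2).symm
      _ ≤ Real.sqrt ((2 * n * ‖v‖) ^ 2) := Real.sqrt_le_sqrt hsq
      _ = 2 * n * ‖v‖ := Real.sqrt_sq hb2
  · intro v
    set w : G.domain := ⟨Rn v, hmem v⟩ with hw
    have h1 : (⟪v, ((n : ℂ) ^ 2) • Rn' (G w)⟫) = (n : ℂ) ^ 2 * ⟪(w : h), G w⟫ := by
      rw [inner_smul_right]
      congr 1
      exact hkey v
    have h2 : (-2 : ℝ) * (⟪v, ((n : ℂ) ^ 2) • Rn' (G w)⟫).re
        = (n : ℝ) ^ 2 * (-2 * (⟪(w : h), G w⟫).re) := by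
      rw [h1]
      have hc : ((n : ℂ) ^ 2 * ⟪(w : h), G w⟫).re
          = (n : ℝ) ^ 2 * (⟪(w : h), G w⟫).re := by
        have hc2 : ((n : ℂ) ^ 2) = (((n : ℝ) ^ 2 : ℝ) : ℂ) := by push_cast; ring
        rw [hc2, Complex.re_ofReal_mul]
      rw [hc]; ring
    rw [h2]
    have h3 : (fun j => ‖(n : ℂ) • L j w‖ ^ 2)
        = fun j => (n : ℝ) ^ 2 * ‖L j w‖ ^ 2 := by
      funext j
      rw [norm_smul]
      simp only [Complex.norm_natCast]
      ring
    rw [h3]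
    exact (hsum w).mul_left _
end
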